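/- Let n, N ≥ 1, let λ_1,…,λ_n > 0 with Σ_k λ_k = 1, let ρ := diag(λ_1,…,λ_n), and let A_1,…,A_N be Hermitian n×n complex matrices. Let m, m' : (0,∞)×(0,∞) → ℝ satisfy 0 < m(x,y) ≤ m'(x,y) ≤ (x+y)/2 for all x,y > 0. Then det G(m') ≤ det G(m). (In the paper's notation: if f̃ ≤ g̃, equivalently m_{f̃} ≤ m_{g̃}, then V(f) ≥ V(g), where V(f) = (f(0)/2)^{N/2} Vol_ρ^f(i[ρ,A_1],…,i[ρ,A_N]).) -/

import Mathlib

open Matrix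

/-- A real PSD matrix with `1 - M` PSD has determinant at most 1. -/
lemma aux_det_le_one {N : ℕ} {M : Matrix (Fin N) (Fin N) ℝ}
    (hM : M.PosSemidef) (h1 : (1 - M).PosSemidef) : M.det ≤ 1 := by
  rw [hM.1.det_eq_prod_eigenvalues]
  simp only [RCLike.ofReal_real_eq_id, id]
  apply Finset.prod_le_one
  · intro i _
    exact hM.eigenvalues_nonneg i
  · intro i _
    set v : Fin N → ℝ := ⇑(hM.1.eigenvectorBasis i) with hv
    have hvne : v ≠ 0 := by
      have h0 := hM.1.eigenvectorBasis.orthonormal.ne_zero i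
      intro h
      exact h0 (by ext t; exact congrFun h t)
    have hev : M *ᵥ v = (hM.1.eigenvalues i) • v := hM.1.mulVec_eigenvectorBasis i
    have hpos : 0 < star v ⬝ᵥ v := dotProduct_star_self_pos_iff.mpr hvne
    rw [star_trivial] at hpos
    have he := h1.dotProduct_mulVec_nonneg v
    rw [star_trivial, sub_mulVec, one_mulVec, dotProduct_sub, hev, dotProduct_smul,
      smul_eq_mul] at he
    nlinarith

open scoped MatrixOrder in
/-- Determinant inequality on real PSD matrices: `det A ≤ det (A + B)`. -/
lemma aux_det_le_det_add {N : ℕ} {A B : Matrix (Fin N) (Fin N) ℝ}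
    (hA : A.PosSemidef) (hB : B.PosSemidef) : A.det ≤ (A + B).det := by
  by_cases hd : (A + B).det = 0
  · obtain ⟨v, hvne, hv0⟩ := (Matrix.exists_mulVec_eq_zero_iff).mpr hd
    have hAv : star v ⬝ᵥ A *ᵥ v = 0 := by
      have h := congrArg (fun w => star v ⬝ᵥ w) hv0
      simp only [add_mulVec, dotProduct_add, dotProduct_zero] at h
      have h1 := hA.dotProduct_mulVec_nonneg v
      have h2 := hB.dotProduct_mulVec_nonneg v
      linarith
    have hAv0 : A *ᵥ v = 0 := (hA.dotProduct_mulVec_zero_iff v).mp hAv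
    have hAd : A.det = 0 := Matrix.exists_mulVec_eq_zero_iff.mp ⟨v, hvne, hAv0⟩
    rw [hAd, hd]
  · have hSsd : (A + B).PosSemidef := hA.add hB
    have hS : (A + B).PosDef := by
      refine Matrix.PosDef.of_dotProduct_mulVec_pos hSsd.1 fun x hx => lt_of_le_of_ne (hSsd.dotProduct_mulVec_nonneg x) fun h => ?_
      have h0 : (A + B) *ᵥ x = 0 := (hSsd.dotProduct_mulVec_zero_iff x).mp h.symm
      exact hd (Matrix.exists_mulVec_eq_zero_iff.mp ⟨x, hx, h0⟩)
    set S := A + B with hSdef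
    set q : Matrix (Fin N) (Fin N) ℝ := CFC.sqrt S with hq
    have hqsd : q.PosSemidef := (CFC.sqrt_nonneg S).posSemidef
    have hqq : q * q = S := CFC.sqrt_mul_sqrt_self S hSsd.nonneg
    have hSdetpos : 0 < S.det := hS.det_pos
    have hqdet : q.det * q.det = S.det := by rw [← det_mul, hqq]
    have hqdet0 : q.det ≠ 0 := fun h => by
      rw [h, mul_zero] at hqdet; exact hSdetpos.ne' hqdet.symm
    have hqunit : IsUnit q.det := isUnit_iff_ne_zero.mpr hqdet0
    set C : Matrix (Fin N) (Fin N) ℝ := q⁻¹ with hC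
    have hCq : C * q = 1 := nonsing_inv_mul q hqunit
    have hqC : q * C = 1 := mul_nonsing_inv q hqunit
    have hCH : Cᴴ = C := hqsd.1.inv
    have hM1 : (C * A * C).PosSemidef := by
      have h2 := hA.mul_mul_conjTranspose_same C
      rwa [hCH] at h2
    have hCSC : C * S * C = 1 := by
      rw [← hqq, show C * (q * q) * C = (C * q) * (q * C) by noncomm_ring, hCq, hqC, one_mul]
    have hM2 : (1 - C * A * C).PosSemidef := by
      have hBC : (C * B * C).PosSemidef := by
        have h2 := hB.mul_mul_conjTranspose_same C
        rwa [hCH] at h2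
      have he : 1 - C * A * C = C * B * C := by
        rw [← hCSC, hSdef]; noncomm_ring
      rwa [he]
    have hdet1 : (C * A * C).det ≤ 1 := aux_det_le_one hM1 hM2
    have hdetM : (C * A * C).det = A.det / S.det := by
      rw [det_mul, det_mul, hC, det_nonsing_inv, Ring.inverse_eq_inv, ← hqdet]
      field_simp
    rw [hdetM] at hdet1
    calc A.det = S.det * (A.det / S.det) := by field_simp
    _ ≤ S.det * 1 := mul_le_mul_of_nonneg_left hdet1 hSdetpos.le
    _ = S.det := mul_one _

/-- A weighted Gram-type matrix with nonnegative weights is positive semidefinite. -/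
lemma aux_weighted_psd {n N : ℕ} (B : Fin N → Matrix (Fin n) (Fin n) ℂ)
    (w : Fin n → Fin n → ℝ) (hw : ∀ k l, 0 ≤ w k l) :
    (Matrix.of fun h j : Fin N =>
      ∑ k, ∑ l, w k l * (B h k l * (starRingEnd ℂ) (B j k l)).re).PosSemidef := by
  have hsymm : ∀ h j k l,
      (B j k l * (starRingEnd ℂ) (B h k l)).re = (B h k l * (starRingEnd ℂ) (B j k l)).re := by
    intro h j k l
    rw [← Complex.conj_re (B h k l * (starRingEnd ℂ) (B j k l)), RingHom.map_mul,
      Complex.conj_conj]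
    ring_nf
  refine Matrix.PosSemidef.of_dotProduct_mulVec_nonneg ?_ ?_
  · ext h j
    simp only [conjTranspose_apply, of_apply, star_trivial]
    exact Finset.sum_congr rfl fun k _ => Finset.sum_congr rfl fun l _ => by
      rw [hsymm h j k l]
  · intro x
    rw [star_trivial]
    have e1 : x ⬝ᵥ (Matrix.of fun h j : Fin N =>
        ∑ k, ∑ l, w k l * (B h k l * (starRingEnd ℂ) (B j k l)).re) *ᵥ x
        = ∑ h, ∑ j, ∑ k, ∑ l,
            x h * (w k l * (B h k l * (starRingEnd ℂ) (B j k l)).re * x j) := by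
      simp only [dotProduct, mulVec, dotProduct, of_apply, Finset.mul_sum, Finset.sum_mul]
    have e2 : ∑ h, ∑ j, ∑ k, ∑ l,
          x h * (w k l * (B h k l * (starRingEnd ℂ) (B j k l)).re * x j)
        = ∑ k, ∑ l, ∑ h, ∑ j,
          x h * (w k l * (B h k l * (starRingEnd ℂ) (B j k l)).re * x j) := by
      calc ∑ h, ∑ j, ∑ k, ∑ l,
            x h * (w k l * (B h k l * (starRingEnd ℂ) (B j k l)).re * x j)
          = ∑ h, ∑ k, ∑ j, ∑ l,
            x h * (w k l * (B h k l * (starRingEnd ℂ) (B j k l)).re * x j) :=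
            Finset.sum_congr rfl fun h _ => Finset.sum_comm
        _ = ∑ k, ∑ h, ∑ j, ∑ l,
            x h * (w k l * (B h k l * (starRingEnd ℂ) (B j k l)).re * x j) :=
            Finset.sum_comm
        _ = ∑ k, ∑ h, ∑ l, ∑ j,
            x h * (w k l * (B h k l * (starRingEnd ℂ) (B j k l)).re * x j) :=
            Finset.sum_congr rfl fun k _ => Finset.sum_congr rfl fun h _ => Finset.sum_comm
        _ = ∑ k, ∑ l, ∑ h, ∑ j,
            x h * (w k l * (B h k l * (starRingEnd ℂ) (B j k l)).re * x j) :=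
            Finset.sum_congr rfl fun k _ => Finset.sum_comm
    have e3 : ∀ k l, (∑ h, ∑ j,
          x h * (w k l * (B h k l * (starRingEnd ℂ) (B j k l)).re * x j))
        = w k l * Complex.normSq (∑ h, (x h : ℂ) * B h k l) := by
      intro k l
      have h1 : Complex.normSq (∑ h, (x h : ℂ) * B h k l)
          = ∑ h, ∑ j, x h * x j * (B h k l * (starRingEnd ℂ) (B j k l)).re := by
        have h2 : ((∑ h, (x h : ℂ) * B h k l) *
            (starRingEnd ℂ) (∑ j, (x j : ℂ) * B j k l)).re
            = ∑ h, ∑ j, x h * x j * (B h k l * (starRingEnd ℂ) (B j k l)).re := by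
          rw [map_sum, Finset.sum_mul_sum, Complex.re_sum]
          refine Finset.sum_congr rfl fun h _ => ?_
          rw [Complex.re_sum]
          refine Finset.sum_congr rfl fun j _ => ?_
          rw [RingHom.map_mul, Complex.conj_ofReal,
            show (x h : ℂ) * B h k l * ((x j : ℂ) * (starRingEnd ℂ) (B j k l))
              = ((x h : ℂ) * (x j : ℂ)) * (B h k l * (starRingEnd ℂ) (B j k l)) by ring,
            ← Complex.ofReal_mul, Complex.re_ofReal_mul]
        rw [Complex.mul_conj] at h2
        rw [← h2, Complex.ofReal_re]
      rw [h1, Finset.mul_sum]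
      refine Finset.sum_congr rfl fun h _ => ?_
      rw [Finset.mul_sum]
      exact Finset.sum_congr rfl fun j _ => by ring
    rw [e1, e2]
    refine Finset.sum_nonneg fun k _ => Finset.sum_nonneg' fun l => ?_
    rw [e3 k l]
    exact mul_nonneg (hw k l) (Complex.normSq_nonneg _)

/-- If `0 < m ≤ m' ≤ (x+y)/2` pointwise on positives, then
`det G(m') ≤ det G(m)`: the quantum-Fisher Gram determinant is antitone in the mean.
(In the paper's notation: `f̃ ≤ g̃` implies `V(f) ≥ V(g)`.) -/
theorem det_fisher_antitone
    (n N : ℕ) (hn : 1 ≤ n) (hN : 1 ≤ N)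
    (lam : Fin n → ℝ) (hpos : ∀ k, 0 < lam k) (hsum : ∑ k, lam k = 1)
    (A : Fin N → Matrix (Fin n) (Fin n) ℂ) (hA : ∀ h, (A h).IsHermitian)
    (m m' : ℝ → ℝ → ℝ)
    (hm : ∀ x y : ℝ, 0 < x → 0 < y →
      0 < m x y ∧ m x y ≤ m' x y ∧ m' x y ≤ (x + y) / 2)
    (ρ : Matrix (Fin n) (Fin n) ℂ)
    (hρ : ρ = Matrix.diagonal fun k => (lam k : ℂ))
    (A₀ : Fin N → Matrix (Fin n) (Fin n) ℂ)
    (hA₀ : ∀ h, A₀ h = A h - (Matrix.trace (ρ * A h)) • (1 : Matrix (Fin n) (Fin n) ℂ))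
    (Cov : Matrix (Fin N) (Fin N) ℝ)
    (hCov : ∀ h j, Cov h j = (Matrix.trace (ρ * A₀ h * A₀ j)).re)
    (G G' : Matrix (Fin N) (Fin N) ℝ)
    (hG : ∀ h j, G h j = Cov h j -
      ∑ k, ∑ l, m (lam k) (lam l) * (A₀ h k l * (starRingEnd ℂ) (A₀ j k l)).re)
    (hG' : ∀ h j, G' h j = Cov h j -
      ∑ k, ∑ l, m' (lam k) (lam l) * (A₀ h k l * (starRingEnd ℂ) (A₀ j k l)).re) :
    G'.det ≤ G.det := by
  have hρH : ρᴴ = ρ := by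
    rw [hρ, diagonal_conjTranspose]
    exact congrArg Matrix.diagonal (funext fun k => Complex.conj_ofReal (lam k))
  have htrreal : ∀ h, (starRingEnd ℂ) (Matrix.trace (ρ * A h)) = Matrix.trace (ρ * A h) := by
    intro h
    calc (starRingEnd ℂ) (Matrix.trace (ρ * A h)) = Matrix.trace ((ρ * A h)ᴴ) := by
          rw [trace_conjTranspose]; rfl
    _ = Matrix.trace ((A h)ᴴ * ρᴴ) := by rw [conjTranspose_mul]
    _ = Matrix.trace (A h * ρ) := by rw [hρH, hA h]
    _ = Matrix.trace (ρ * A h) := trace_mul_comm _ _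
  have hHerm : ∀ h, (A₀ h).IsHermitian := by
    intro h
    rw [hA₀ h]
    refine (hA h).sub ?_
    show (Matrix.trace (ρ * A h) • (1 : Matrix (Fin n) (Fin n) ℂ))ᴴ = _
    rw [conjTranspose_smul, conjTranspose_one]
    rw [show star (Matrix.trace (ρ * A h)) = (starRingEnd ℂ) (Matrix.trace (ρ * A h)) from rfl,
      htrreal h]
  have hconj : ∀ (p : Fin N) (k l : Fin n), (starRingEnd ℂ) (A₀ p k l) = A₀ p l k :=
    fun p k l => (hHerm p).apply l k
  -- trace formula
  have htr : ∀ h j, Cov h j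
      = ∑ k, ∑ l, lam k * (A₀ h k l * (starRingEnd ℂ) (A₀ j k l)).re := by
    intro h j
    rw [hCov h j]
    have hexp : Matrix.trace (ρ * A₀ h * A₀ j)
        = ∑ k, ∑ l, ((lam k : ℂ)) * (A₀ h k l * (starRingEnd ℂ) (A₀ j k l)) := by
      rw [hρ]
      simp only [Matrix.trace, Matrix.diag, Matrix.mul_apply, Matrix.diagonal_apply,
        ite_mul, zero_mul, Finset.sum_ite_eq, Finset.mem_univ, if_true]
      refine Finset.sum_congr rfl fun k _ => Finset.sum_congr rfl fun l _ => ?_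
      rw [hconj j k l]
      ring
    rw [hexp, Complex.re_sum]
    refine Finset.sum_congr rfl fun k _ => ?_
    rw [Complex.re_sum]
    exact Finset.sum_congr rfl fun l _ => Complex.re_ofReal_mul _ _
  -- symmetrized formula
  have hsw : ∀ h j, (∑ k, ∑ l, lam k * (A₀ h k l * (starRingEnd ℂ) (A₀ j k l)).re)
      = ∑ k, ∑ l, lam l * (A₀ h k l * (starRingEnd ℂ) (A₀ j k l)).re := by
    intro h j
    rw [Finset.sum_comm]
    refine Finset.sum_congr rfl fun k _ => Finset.sum_congr rfl fun l _ => ?_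
    congr 1
    rw [show A₀ h l k = (starRingEnd ℂ) (A₀ h k l) from (hconj h k l).symm,
      show A₀ j l k = (starRingEnd ℂ) (A₀ j k l) from (hconj j k l).symm,
      Complex.conj_conj,
      show (starRingEnd ℂ) (A₀ h k l) * A₀ j k l
        = (starRingEnd ℂ) (A₀ h k l * (starRingEnd ℂ) (A₀ j k l)) by
          rw [RingHom.map_mul, Complex.conj_conj],
      Complex.conj_re]
  have hCov2 : ∀ h j, Cov h j
      = ∑ k, ∑ l, ((lam k + lam l) / 2) * (A₀ h k l * (starRingEnd ℂ) (A₀ j k l)).re := by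
    intro h j
    have e1 := htr h j
    have e2 := hsw h j
    have h2 : ∑ k, ∑ l, ((lam k + lam l) / 2) * (A₀ h k l * (starRingEnd ℂ) (A₀ j k l)).re
        = ((∑ k, ∑ l, lam k * (A₀ h k l * (starRingEnd ℂ) (A₀ j k l)).re)
          + ∑ k, ∑ l, lam l * (A₀ h k l * (starRingEnd ℂ) (A₀ j k l)).re) / 2 := by
      rw [← Finset.sum_add_distrib, Finset.sum_div]
      refine Finset.sum_congr rfl fun k _ => ?_
      rw [← Finset.sum_add_distrib, Finset.sum_div]
      exact Finset.sum_congr rfl fun l _ => by ring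
    rw [e1, h2, ← e2]
    ring
  -- decomposition into PSD pieces
  have hG'eq : G' = Matrix.of fun h j : Fin N =>
      ∑ k, ∑ l, ((lam k + lam l) / 2 - m' (lam k) (lam l)) *
        (A₀ h k l * (starRingEnd ℂ) (A₀ j k l)).re := by
    ext h j
    rw [hG' h j, hCov2 h j, of_apply, ← Finset.sum_sub_distrib]
    refine Finset.sum_congr rfl fun k _ => ?_
    rw [← Finset.sum_sub_distrib]
    exact Finset.sum_congr rfl fun l _ => by ring
  have hGsub : G - G' = Matrix.of fun h j : Fin N =>
      ∑ k, ∑ l, (m' (lam k) (lam l) - m (lam k) (lam l)) *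
        (A₀ h k l * (starRingEnd ℂ) (A₀ j k l)).re := by
    ext h j
    rw [Matrix.sub_apply, hG h j, hG' h j, of_apply]
    rw [show Cov h j - (∑ k, ∑ l, m (lam k) (lam l) * (A₀ h k l * (starRingEnd ℂ) (A₀ j k l)).re)
        - (Cov h j - ∑ k, ∑ l, m' (lam k) (lam l) * (A₀ h k l * (starRingEnd ℂ) (A₀ j k l)).re)
        = (∑ k, ∑ l, m' (lam k) (lam l) * (A₀ h k l * (starRingEnd ℂ) (A₀ j k l)).re)
          - ∑ k, ∑ l, m (lam k) (lam l) * (A₀ h k l * (starRingEnd ℂ) (A₀ j k l)).re by ring,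
      ← Finset.sum_sub_distrib]
    refine Finset.sum_congr rfl fun k _ => ?_
    rw [← Finset.sum_sub_distrib]
    exact Finset.sum_congr rfl fun l _ => by ring
  have hG'psd : G'.PosSemidef := by
    rw [hG'eq]
    exact aux_weighted_psd A₀ _ fun k l => by
      have := hm (lam k) (lam l) (hpos k) (hpos l)
      linarith [this.2.2]
  have hsubpsd : (G - G').PosSemidef := by
    rw [hGsub]
    exact aux_weighted_psd A₀ _ fun k l => by
      have := hm (lam k) (lam l) (hpos k) (hpos l)
      linarith [this.2.1]
  have hfin := aux_det_le_det_add hG'psd hsubpsd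
  rwa [add_sub_cancel] at hfin
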